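/- Let c, k, t be positive integers with c ≥ 2 and k ≥ t+3. Suppose R and S are cross t-intersecting subfamilies of U^{[ck]}_{c,t+1} with τ_t(R) = τ_t(S) = t+1, and R is not t-intersecting. Then either (i) t = 1 and R = {A₁, A₂, C}, S = {B₁, B₂, C} where A₁={e₁,e₂}, A₂={e₃,e₄}, B₁={e₁,e₃}, B₂={e₂,e₄}, C={e₁,e₄} are pairs of disjoint c-subsets of [ck]; or (ii) |R|·|S| < (t+2)² and |R| + |S| ≤ 8. -/

import Mathlib

open Finset

/-- `UParts c k ℓ S`: `S` is a family of `ℓ` pairwise disjoint `c`-subsets of `[ck]`. -/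
def UParts (c k ℓ : ℕ) (S : Finset (Finset (Fin (c * k)))) : Prop :=
  S.card = ℓ ∧ (∀ e ∈ S, e.card = c) ∧
    ∀ e ∈ S, ∀ f ∈ S, e ≠ f → Disjoint e f

/-- `UPartition c k F`: `F` is a `c`-uniform partition of `[ck]` into `k` blocks. -/
def UPartition (c k : ℕ) (F : Finset (Finset (Fin (c * k)))) : Prop :=
  UParts c k k F ∧ ∀ x : Fin (c * k), ∃ e ∈ F, x ∈ e

/-- Cross `t`-intersecting families: any two members from different families share `≥ t` blocks. -/
def CrossInt (c k t : ℕ) (F G : Finset (Finset (Finset (Fin (c * k))))) : Prop :=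
  ∀ A ∈ F, ∀ B ∈ G, t ≤ (A ∩ B).card

/-- `S` is a `t`-cover of the family `F`: a family of pairwise disjoint `c`-subsets meeting
every member of `F` in at least `t` blocks. -/
def IsTCover (c k t : ℕ) (F : Finset (Finset (Finset (Fin (c * k)))))
    (S : Finset (Finset (Fin (c * k)))) : Prop :=
  UParts c k S.card S ∧ ∀ A ∈ F, t ≤ (S ∩ A).card

/-- The `t`-covering number: minimum size of a `t`-cover. -/
noncomputable def tau (c k t : ℕ) (F : Finset (Finset (Finset (Fin (c * k))))) : ℕ :=
  sInf {s | ∃ S, IsTCover c k t F S ∧ S.card = s}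

/-- `θ(c,k,z) = (1/(k-z)!) · ∏_{i=z}^{k-1} C((k-i)c, c)`. -/
def theta (c k z : ℕ) : ℚ :=
  (1 / ((k - z).factorial : ℚ)) * ∏ i ∈ Finset.Ico z k, ((((k - i) * c).choose c : ℕ) : ℚ)

/-- `g(c,k,t,z) = θ(c,k,z)·C(z,t)·∏_{j=1}^{z-t}(k-(t+j-1))`. -/
def gfun (c k t z : ℕ) : ℚ :=
  theta c k z * ((z.choose t : ℕ) : ℚ) * ∏ j ∈ Finset.Icc 1 (z - t), ((k - (t + j - 1) : ℕ) : ℚ)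

/-- `f₀(c,k,t) = (k-t-1)·θ(c,k,t+1) − C(k-t-1,2)·θ(c,k,t+2)`. -/
def f0 (c k t : ℕ) : ℚ :=
  ((k - t - 1 : ℕ) : ℚ) * theta c k (t + 1) - (((k - t - 1).choose 2 : ℕ) : ℚ) * theta c k (t + 2)

/-- `f₂(c,k,t) = (t+2)·θ(c,k,t+1) − (t+1)(k-t-1)·θ(c,k,t+2)`. -/
def f2q (c k t : ℕ) : ℚ :=
  ((t : ℚ) + 2) * theta c k (t + 1) - ((t : ℚ) + 1) * ((k - t - 1 : ℕ) : ℚ) * theta c k (t + 2)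


lemma keyA {α : Type*} [DecidableEq α] {t : ℕ} {R₁ R₂ S : Finset α}
    (h1 : R₁.card = t+1) (h2 : R₂.card = t+1) (hS : S.card = t+1)
    (hIlt : (R₁ ∩ R₂).card < t) (c1 : t ≤ (S ∩ R₁).card) (c2 : t ≤ (S ∩ R₂).card) :
    (R₁ ∩ R₂).card + 1 = t ∧ R₁ ∩ R₂ ⊆ S ∧
      ∃ u v, u ∈ R₁ ∧ u ∉ R₂ ∧ v ∈ R₂ ∧ v ∉ R₁ ∧ S = (R₁ ∩ R₂) ∪ {u, v} := by
  have key : (S ∩ R₁) ∪ (S ∩ R₂) ⊆ S := union_subset inter_subset_left inter_subset_left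
  have e1 := card_union_add_card_inter (S ∩ R₁) (S ∩ R₂)
  have e2 : (S ∩ R₁) ∩ (S ∩ R₂) = S ∩ (R₁ ∩ R₂) := by
    ext x; simp only [mem_inter]; tauto
  rw [e2] at e1
  have l1 : ((S ∩ R₁) ∪ (S ∩ R₂)).card ≤ t + 1 := hS ▸ card_le_card key
  have l2 : (S ∩ (R₁ ∩ R₂)).card ≤ (R₁ ∩ R₂).card := card_le_card inter_subset_right
  have uA : (S ∩ R₁).card ≤ t + 1 := hS ▸ card_le_card inter_subset_left
  have uB : (S ∩ R₂).card ≤ t + 1 := hS ▸ card_le_card inter_subset_left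
  have hIeq : (R₁ ∩ R₂).card + 1 = t := by omega
  have hMI : S ∩ (R₁ ∩ R₂) = R₁ ∩ R₂ :=
    eq_of_subset_of_card_le inter_subset_right (by omega)
  have hIS : R₁ ∩ R₂ ⊆ S := by rw [← hMI]; exact inter_subset_left
  have hA : (S ∩ R₁).card = t := by omega
  have hB : (S ∩ R₂).card = t := by omega
  have hU : ((S ∩ R₁) ∪ (S ∩ R₂)).card = t + 1 := by omega
  have hUn : (S ∩ R₁) ∪ (S ∩ R₂) = S := eq_of_subset_of_card_le key (by omega)
  have hsub1 : R₁ ∩ R₂ ⊆ S ∩ R₁ := subset_inter hIS inter_subset_left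
  have hsub2 : R₁ ∩ R₂ ⊆ S ∩ R₂ := subset_inter hIS inter_subset_right
  have d1 : ((S ∩ R₁) \ (R₁ ∩ R₂)).card = 1 := by
    rw [card_sdiff_of_subset hsub1]; omega
  have d2 : ((S ∩ R₂) \ (R₁ ∩ R₂)).card = 1 := by
    rw [card_sdiff_of_subset hsub2]; omega
  obtain ⟨u, hu⟩ := card_eq_one.mp d1
  obtain ⟨v, hv⟩ := card_eq_one.mp d2
  have hu' : u ∈ (S ∩ R₁) \ (R₁ ∩ R₂) := by rw [hu]; exact mem_singleton_self u
  have hv' : v ∈ (S ∩ R₂) \ (R₁ ∩ R₂) := by rw [hv]; exact mem_singleton_self v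
  simp only [mem_sdiff, mem_inter] at hu' hv'
  refine ⟨hIeq, hIS, u, v, hu'.1.2, fun h => hu'.2 ⟨hu'.1.2, h⟩,
    hv'.1.2, fun h => hv'.2 ⟨h, hv'.1.2⟩, ?_⟩
  have e3 : S ∩ R₁ = (R₁ ∩ R₂) ∪ {u} := by
    rw [← hu, union_sdiff_of_subset hsub1]
  have e4 : S ∩ R₂ = (R₁ ∩ R₂) ∪ {v} := by
    rw [← hv, union_sdiff_of_subset hsub2]
  rw [← hUn, e3, e4]
  ext x
  simp only [mem_union, mem_insert, mem_singleton]
  tauto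
lemma uparts_sub {c k ℓ : ℕ} {S T : Finset (Finset (Fin (c * k)))}
    (h : UParts c k ℓ S) (hT : T ⊆ S) : UParts c k T.card T :=
  ⟨rfl, fun e he => h.2.1 e (hT he), fun e he f hf => h.2.2 e (hT he) f (hT hf)⟩

lemma tau_le_card {c k t : ℕ} {F : Finset (Finset (Finset (Fin (c * k))))}
    {T : Finset (Finset (Fin (c * k)))} (h : IsTCover c k t F T) :
    tau c k t F ≤ T.card := Nat.sInf_le ⟨T, h, rfl⟩

lemma card_le_two' {α : Type*} [DecidableEq α] (x y : α) : ({x, y} : Finset α).card ≤ 2 :=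
  (card_insert_le _ _).trans (by simp)

lemma card_le_three' {α : Type*} [DecidableEq α] (x y z : α) : ({x, y, z} : Finset α).card ≤ 3 :=
  (card_insert_le _ _).trans (by have := card_le_two' y z; omega)

lemma card_le_four' {α : Type*} [DecidableEq α] (x y z w : α) :
    ({x, y, z, w} : Finset α).card ≤ 4 :=
  (card_insert_le _ _).trans (by have := card_le_three' y z w; omega)

lemma interI {α : Type*} [DecidableEq α] {I : Finset α} {x y z w : α}
    (hx : x ∉ I) (hy : y ∉ I) (hxz : x ≠ z) (hxw : x ≠ w) (hyz : y ≠ z) (hyw : y ≠ w) :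
    (I ∪ {x, y}) ∩ (I ∪ {z, w}) = I := by
  ext v
  simp only [mem_inter, mem_union, mem_insert, mem_singleton]
  constructor
  · rintro ⟨h1 | rfl | rfl, h2 | h2 | h2⟩ <;> tauto
  · tauto
lemma core (c k t : ℕ) (ht : 1 ≤ t)
    (𝓡 𝓢 : Finset (Finset (Finset (Fin (c * k)))))
    (h𝓡 : ∀ R ∈ 𝓡, UParts c k (t + 1) R) (h𝓢 : ∀ S ∈ 𝓢, UParts c k (t + 1) S)
    (hcross : CrossInt c k t 𝓡 𝓢)
    (I : Finset (Finset (Fin (c * k)))) (a a' b b' : Finset (Fin (c * k)))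
    (haI : a ∉ I) (ha'I : a' ∉ I) (hbI : b ∉ I) (hb'I : b' ∉ I)
    (haa' : a ≠ a') (hbb' : b ≠ b') (hab : a ≠ b) (hab' : a ≠ b')
    (ha'b : a' ≠ b) (ha'b' : a' ≠ b')
    (hIc : I.card + 1 = t)
    (hR1 : I ∪ {a, a'} ∈ 𝓡) (hR2 : I ∪ {b, b'} ∈ 𝓡)
    (hS1 : I ∪ {a, b} ∈ 𝓢) (hS2 : I ∪ {a', b'} ∈ 𝓢)
    (hSstruct : ∀ S ∈ 𝓢, S = I ∪ {a, b} ∨ S = I ∪ {a, b'} ∨ S = I ∪ {a', b} ∨ S = I ∪ {a', b'})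
    (hRstruct : ∀ R ∈ 𝓡, R = I ∪ {a, a'} ∨ R = I ∪ {a, b'} ∨ R = I ∪ {a', b} ∨ R = I ∪ {b, b'})
    (hX : I ∪ {a, b'} ∈ 𝓡) :
    (t = 1 ∧ ∃ e₁ e₂ e₃ e₄ : Finset (Fin (c * k)),
      UParts c k 2 {e₁, e₂} ∧ UParts c k 2 {e₃, e₄} ∧ UParts c k 2 {e₁, e₃} ∧
        UParts c k 2 {e₂, e₄} ∧ UParts c k 2 {e₁, e₄} ∧
        𝓡 = {{e₁, e₂}, {e₃, e₄}, {e₁, e₄}} ∧ 𝓢 = {{e₁, e₃}, {e₂, e₄}, {e₁, e₄}}) ∨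
    (𝓡.card * 𝓢.card < (t + 2) ^ 2 ∧ 𝓡.card + 𝓢.card ≤ 8) := by
  have h9 : 9 ≤ (t + 2) ^ 2 := by nlinarith
  have conflict : ∀ x y z w : Finset (Fin (c * k)), x ∉ I → y ∉ I → x ≠ z → x ≠ w →
      y ≠ z → y ≠ w → I ∪ {x, y} ∈ 𝓡 → I ∪ {z, w} ∈ 𝓢 → False := by
    intro x y z w hx hy hxz hxw hyz hyw hmr hms
    have hc2 := hcross _ hmr _ hms
    rw [interI hx hy hxz hxw hyz hyw] at hc2
    omega
  have hna'b : I ∪ {a', b} ∉ 𝓢 := fun h =>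
    conflict a b' a' b haI hb'I haa' hab ha'b'.symm hbb'.symm hX h
  have hRsub4 : 𝓡 ⊆ {I ∪ {a, a'}, I ∪ {a, b'}, I ∪ {a', b}, I ∪ {b, b'}} := fun R hR => by
    rcases hRstruct R hR with rfl | rfl | rfl | rfl <;> simp
  have hrc4 : 𝓡.card ≤ 4 := (card_le_card hRsub4).trans (card_le_four' _ _ _ _)
  by_cases h2 : I ∪ {a', b} ∈ 𝓡
  · have hnab' : I ∪ {a, b'} ∉ 𝓢 := fun h =>
      conflict a' b a b' ha'I hbI haa'.symm ha'b' hab.symm hbb' h2 h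
    have hSsub2 : 𝓢 ⊆ {I ∪ {a, b}, I ∪ {a', b'}} := fun S hS => by
      rcases hSstruct S hS with rfl | rfl | rfl | rfl
      · simp
      · exact absurd hS hnab'
      · exact absurd hS hna'b
      · simp
    have hsc : 𝓢.card ≤ 2 := (card_le_card hSsub2).trans (card_le_two' _ _)
    right
    refine ⟨lt_of_le_of_lt (Nat.mul_le_mul hrc4 hsc) (by omega), by omega⟩
  · have hRsub : 𝓡 ⊆ {I ∪ {a, a'}, I ∪ {a, b'}, I ∪ {b, b'}} := fun R hR => by
      rcases hRstruct R hR with rfl | rfl | rfl | rfl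
      · simp
      · simp
      · exact absurd hR h2
      · simp
    have hrc : 𝓡.card ≤ 3 := le_trans (card_le_card hRsub) (card_le_three' _ _ _)
    by_cases h3 : I ∪ {a, b'} ∈ 𝓢
    · have hSsub : 𝓢 ⊆ {I ∪ {a, b}, I ∪ {a, b'}, I ∪ {a', b'}} := fun S hS => by
        rcases hSstruct S hS with rfl | rfl | rfl | rfl
        · simp
        · simp
        · exact absurd hS hna'b
        · simp
      have hsc : 𝓢.card ≤ 3 := le_trans (card_le_card hSsub) (card_le_three' _ _ _)
      by_cases ht1 : t = 1
      · left
        have hI0 : I = ∅ := card_eq_zero.mp (by omega)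
        have hRe : 𝓡 = {I ∪ {a, a'}, I ∪ {a, b'}, I ∪ {b, b'}} :=
          Subset.antisymm hRsub (insert_subset_iff.mpr ⟨hR1, insert_subset_iff.mpr ⟨hX, singleton_subset_iff.mpr hR2⟩⟩)
        have hSe : 𝓢 = {I ∪ {a, b}, I ∪ {a, b'}, I ∪ {a', b'}} :=
          Subset.antisymm hSsub (insert_subset_iff.mpr ⟨hS1, insert_subset_iff.mpr ⟨h3, singleton_subset_iff.mpr hS2⟩⟩)
        have u1 := h𝓡 _ hR1
        have u2 := h𝓡 _ hR2
        have u3 := h𝓢 _ hS1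
        have u4 := h𝓢 _ hS2
        have u5 := h𝓢 _ h3
        rw [ht1, hI0, empty_union] at u1 u2 u3 u4 u5
        rw [hI0, empty_union, empty_union, empty_union] at hRe hSe
        refine ⟨ht1, a, a', b, b', u1, u2, u3, u4, u5, ?_, ?_⟩
        · rw [hRe]; ext x; simp only [mem_insert, mem_singleton]; tauto
        · rw [hSe]; ext x; simp only [mem_insert, mem_singleton]; tauto
      · right
        have h16 : 16 ≤ (t + 2) ^ 2 := by nlinarith [show 2 ≤ t by omega]
        refine ⟨lt_of_le_of_lt (Nat.mul_le_mul hrc hsc) (by omega), by omega⟩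
    · have hSsub2 : 𝓢 ⊆ {I ∪ {a, b}, I ∪ {a', b'}} := fun S hS => by
        rcases hSstruct S hS with rfl | rfl | rfl | rfl
        · simp
        · exact absurd hS h3
        · exact absurd hS hna'b
        · simp
      have hsc : 𝓢.card ≤ 2 := (card_le_card hSsub2).trans (card_le_two' _ _)
      right
      refine ⟨lt_of_le_of_lt (Nat.mul_le_mul hrc hsc) (by omega), by omega⟩
lemma endgame (c k t : ℕ) (ht : 1 ≤ t)
    (𝓡 𝓢 : Finset (Finset (Finset (Fin (c * k)))))
    (h𝓡 : ∀ R ∈ 𝓡, UParts c k (t + 1) R) (h𝓢 : ∀ S ∈ 𝓢, UParts c k (t + 1) S)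
    (hcross : CrossInt c k t 𝓡 𝓢)
    (I : Finset (Finset (Fin (c * k)))) (a a' b b' : Finset (Fin (c * k)))
    (haI : a ∉ I) (ha'I : a' ∉ I) (hbI : b ∉ I) (hb'I : b' ∉ I)
    (haa' : a ≠ a') (hbb' : b ≠ b') (hab : a ≠ b) (hab' : a ≠ b')
    (ha'b : a' ≠ b) (ha'b' : a' ≠ b')
    (hIc : I.card + 1 = t)
    (hR1 : I ∪ {a, a'} ∈ 𝓡) (hR2 : I ∪ {b, b'} ∈ 𝓡)
    (hS1 : I ∪ {a, b} ∈ 𝓢) (hS2 : I ∪ {a', b'} ∈ 𝓢)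
    (hSstruct : ∀ S ∈ 𝓢, S = I ∪ {a, b} ∨ S = I ∪ {a, b'} ∨ S = I ∪ {a', b} ∨ S = I ∪ {a', b'})
    (hRstruct : ∀ R ∈ 𝓡, R = I ∪ {a, a'} ∨ R = I ∪ {a, b'} ∨ R = I ∪ {a', b} ∨ R = I ∪ {b, b'}) :
    (t = 1 ∧ ∃ e₁ e₂ e₃ e₄ : Finset (Fin (c * k)),
      UParts c k 2 {e₁, e₂} ∧ UParts c k 2 {e₃, e₄} ∧ UParts c k 2 {e₁, e₃} ∧
        UParts c k 2 {e₂, e₄} ∧ UParts c k 2 {e₁, e₄} ∧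
        𝓡 = {{e₁, e₂}, {e₃, e₄}, {e₁, e₄}} ∧ 𝓢 = {{e₁, e₃}, {e₂, e₄}, {e₁, e₄}}) ∨
    (𝓡.card * 𝓢.card < (t + 2) ^ 2 ∧ 𝓡.card + 𝓢.card ≤ 8) := by
  by_cases h1 : I ∪ {a, b'} ∈ 𝓡
  · exact core c k t ht 𝓡 𝓢 h𝓡 h𝓢 hcross I a a' b b' haI ha'I hbI hb'I haa' hbb' hab hab'
      ha'b ha'b' hIc hR1 hR2 hS1 hS2 hSstruct hRstruct h1
  · by_cases h2 : I ∪ {a', b} ∈ 𝓡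
    · exact core c k t ht 𝓡 𝓢 h𝓡 h𝓢 hcross I a' a b' b ha'I haI hb'I hbI haa'.symm hbb'.symm
        ha'b' ha'b hab' hab hIc
        (by rw [pair_comm a' a]; exact hR1) (by rw [pair_comm b' b]; exact hR2)
        hS2 hS1
        (fun S hS => by rcases hSstruct S hS with h | h | h | h <;> tauto)
        (fun R hR => by
          rcases hRstruct R hR with h | h | h | h
          · exact Or.inl (by rw [h, pair_comm a a'])
          · exact Or.inr (Or.inr (Or.inl h))
          · exact Or.inr (Or.inl h)
          · exact Or.inr (Or.inr (Or.inr (by rw [h, pair_comm b b'])))) h2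
    · have hRsub : 𝓡 ⊆ {I ∪ {a, a'}, I ∪ {b, b'}} := fun R hR => by
        rcases hRstruct R hR with rfl | rfl | rfl | rfl
        · simp
        · exact absurd hR h1
        · exact absurd hR h2
        · simp
      have hSsub : 𝓢 ⊆ {I ∪ {a, b}, I ∪ {a, b'}, I ∪ {a', b}, I ∪ {a', b'}} := fun S hS => by
        rcases hSstruct S hS with rfl | rfl | rfl | rfl <;> simp
      have hrc : 𝓡.card ≤ 2 := (card_le_card hRsub).trans (card_le_two' _ _)
      have hsc : 𝓢.card ≤ 4 := (card_le_card hSsub).trans (card_le_four' _ _ _ _)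
      have h9 : 9 ≤ (t + 2) ^ 2 := by nlinarith
      right
      exact ⟨lt_of_le_of_lt (Nat.mul_le_mul hrc hsc) (by omega), by omega⟩
theorem stmt7 (c k t : ℕ) (hc : 2 ≤ c) (ht : 1 ≤ t) (hk : t + 3 ≤ k)
    (𝓡 𝓢 : Finset (Finset (Finset (Fin (c * k)))))
    (h𝓡 : ∀ R ∈ 𝓡, UParts c k (t + 1) R) (h𝓢 : ∀ S ∈ 𝓢, UParts c k (t + 1) S)
    (hcross : CrossInt c k t 𝓡 𝓢)
    (hτR : tau c k t 𝓡 = t + 1) (hτS : tau c k t 𝓢 = t + 1)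
    (hnotint : ¬ ∀ R₁ ∈ 𝓡, ∀ R₂ ∈ 𝓡, t ≤ (R₁ ∩ R₂).card) :
    (t = 1 ∧ ∃ e₁ e₂ e₃ e₄ : Finset (Fin (c * k)),
      UParts c k 2 {e₁, e₂} ∧ UParts c k 2 {e₃, e₄} ∧ UParts c k 2 {e₁, e₃} ∧
        UParts c k 2 {e₂, e₄} ∧ UParts c k 2 {e₁, e₄} ∧
        𝓡 = {{e₁, e₂}, {e₃, e₄}, {e₁, e₄}} ∧ 𝓢 = {{e₁, e₃}, {e₂, e₄}, {e₁, e₄}}) ∨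
    (𝓡.card * 𝓢.card < (t + 2) ^ 2 ∧ 𝓡.card + 𝓢.card ≤ 8) := by
  push_neg at hnotint
  obtain ⟨R₁, hR₁, R₂, hR₂, hlt⟩ := hnotint
  obtain ⟨S₀, hS₀⟩ : 𝓢.Nonempty := by
    rcases 𝓢.eq_empty_or_nonempty with h | h
    · exfalso
      have hcov : IsTCover c k t 𝓢 ∅ := ⟨⟨rfl, by simp, by simp⟩, by simp [h]⟩
      have h0 := tau_le_card hcov
      rw [hτS] at h0
      simp at h0
    · exact h
  have hcR1 := (h𝓡 _ hR₁).1
  have hcR2 := (h𝓡 _ hR₂).1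
  have hcS0 := (h𝓢 _ hS₀).1
  obtain ⟨hIc', -, -⟩ := keyA hcR1 hcR2 hcS0 hlt
    (by rw [inter_comm]; exact hcross _ hR₁ _ hS₀)
    (by rw [inter_comm]; exact hcross _ hR₂ _ hS₀)
  obtain ⟨I, hIdef⟩ : ∃ I, I = R₁ ∩ R₂ := ⟨_, rfl⟩
  have hIc : I.card + 1 = t := by rw [hIdef]; exact hIc'
  have hd1 : (R₁ \ I).card = 2 := by
    rw [hIdef, card_sdiff_of_subset inter_subset_left]; omega
  obtain ⟨a, a', haa', hset1⟩ := card_eq_two.mp hd1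
  have hd2 : (R₂ \ I).card = 2 := by
    rw [hIdef, card_sdiff_of_subset inter_subset_right]; omega
  obtain ⟨b, b', hbb', hset2⟩ := card_eq_two.mp hd2
  have haR : a ∈ R₁ ∧ a ∉ I := mem_sdiff.mp (by rw [hset1]; simp)
  have ha'R : a' ∈ R₁ ∧ a' ∉ I := mem_sdiff.mp (by rw [hset1]; simp)
  have hbR : b ∈ R₂ ∧ b ∉ I := mem_sdiff.mp (by rw [hset2]; simp)
  have hb'R : b' ∈ R₂ ∧ b' ∉ I := mem_sdiff.mp (by rw [hset2]; simp)
  have hanR2 : a ∉ R₂ := fun h => haR.2 (by rw [hIdef]; exact mem_inter.mpr ⟨haR.1, h⟩)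
  have ha'nR2 : a' ∉ R₂ := fun h => ha'R.2 (by rw [hIdef]; exact mem_inter.mpr ⟨ha'R.1, h⟩)
  have hbnR1 : b ∉ R₁ := fun h => hbR.2 (by rw [hIdef]; exact mem_inter.mpr ⟨h, hbR.1⟩)
  have hb'nR1 : b' ∉ R₁ := fun h => hb'R.2 (by rw [hIdef]; exact mem_inter.mpr ⟨h, hb'R.1⟩)
  have hab : a ≠ b := fun h => hbnR1 (h ▸ haR.1)
  have hab' : a ≠ b' := fun h => hb'nR1 (h ▸ haR.1)
  have ha'b : a' ≠ b := fun h => hbnR1 (h ▸ ha'R.1)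
  have ha'b' : a' ≠ b' := fun h => hb'nR1 (h ▸ ha'R.1)
  have hR1eq : R₁ = I ∪ {a, a'} := by
    rw [← hset1, hIdef]; exact (union_sdiff_of_subset inter_subset_left).symm
  have hR2eq : R₂ = I ∪ {b, b'} := by
    rw [← hset2, hIdef]; exact (union_sdiff_of_subset inter_subset_right).symm
  have hR1mem : I ∪ {a, a'} ∈ 𝓡 := hR1eq ▸ hR₁
  have hR2mem : I ∪ {b, b'} ∈ 𝓡 := hR2eq ▸ hR₂
  -- structure of 𝓢
  have hSstruct : ∀ S ∈ 𝓢,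
      S = I ∪ {a, b} ∨ S = I ∪ {a, b'} ∨ S = I ∪ {a', b} ∨ S = I ∪ {a', b'} := by
    intro S hS
    obtain ⟨-, -, u, v, huR1, hunR2, hvR2, hvnR1, hSeq⟩ := keyA hcR1 hcR2 (h𝓢 _ hS).1 hlt
      (by rw [inter_comm]; exact hcross _ hR₁ _ hS)
      (by rw [inter_comm]; exact hcross _ hR₂ _ hS)
    rw [← hIdef] at hSeq
    have hu : u = a ∨ u = a' := by
      have : u ∈ ({a, a'} : Finset _) := by
        rw [← hset1]
        refine mem_sdiff.mpr ⟨huR1, fun h => hunR2 ?_⟩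
        rw [hIdef] at h; exact (mem_inter.mp h).2
      simpa using this
    have hv : v = b ∨ v = b' := by
      have : v ∈ ({b, b'} : Finset _) := by
        rw [← hset2]
        refine mem_sdiff.mpr ⟨hvR2, fun h => hvnR1 ?_⟩
        rw [hIdef] at h; exact (mem_inter.mp h).1
      simpa using this
    rcases hu with rfl | rfl <;> rcases hv with rfl | rfl
    · exact Or.inl hSeq
    · exact Or.inr (Or.inl hSeq)
    · exact Or.inr (Or.inr (Or.inl hSeq))
    · exact Or.inr (Or.inr (Or.inr hSeq))
  -- diagonal pair in 𝓢
  have hins1 : ∀ u v : Finset (Fin (c * k)), insert u I ⊆ I ∪ {u, v} :=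
    fun u v => insert_subset (mem_union_right _ (by simp)) subset_union_left
  have hins2 : ∀ u v : Finset (Fin (c * k)), insert v I ⊆ I ∪ {u, v} :=
    fun u v => insert_subset (mem_union_right _ (by simp)) subset_union_left
  have coverLem : ∀ x : Finset (Fin (c * k)), x ∉ I → (∀ S ∈ 𝓢, insert x I ⊆ S) → False := by
    intro x hx hsub
    have hcard : (insert x I).card = t := by rw [card_insert_of_notMem hx]; omega
    have hcov : IsTCover c k t 𝓢 (insert x I) :=
      ⟨uparts_sub (h𝓢 _ hS₀) (hsub _ hS₀), fun A hA => by
        rw [inter_eq_left.mpr (hsub _ hA), hcard]⟩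
    have h0 := tau_le_card hcov
    rw [hτS, hcard] at h0
    omega
  have hdiag : (I ∪ {a, b} ∈ 𝓢 ∧ I ∪ {a', b'} ∈ 𝓢) ∨
      (I ∪ {a, b'} ∈ 𝓢 ∧ I ∪ {a', b} ∈ 𝓢) := by
    by_contra hcon
    push_neg at hcon
    obtain ⟨h12, h34⟩ := hcon
    by_cases p1 : I ∪ {a, b} ∈ 𝓢
    · have np4 : I ∪ {a', b'} ∉ 𝓢 := h12 p1
      by_cases p2 : I ∪ {a, b'} ∈ 𝓢
      · have np3 : I ∪ {a', b} ∉ 𝓢 := h34 p2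
        exact coverLem a haR.2 (fun S hS => by
          rcases hSstruct S hS with rfl | rfl | rfl | rfl
          · exact hins1 a b
          · exact hins1 a b'
          · exact absurd hS np3
          · exact absurd hS np4)
      · by_cases p3 : I ∪ {a', b} ∈ 𝓢
        · exact coverLem b hbR.2 (fun S hS => by
            rcases hSstruct S hS with rfl | rfl | rfl | rfl
            · exact hins2 a b
            · exact absurd hS p2
            · exact hins2 a' b
            · exact absurd hS np4)
        · exact coverLem a haR.2 (fun S hS => by
            rcases hSstruct S hS with rfl | rfl | rfl | rfl
            · exact hins1 a b
            · exact absurd hS p2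
            · exact absurd hS p3
            · exact absurd hS np4)
    · by_cases p2 : I ∪ {a, b'} ∈ 𝓢
      · have np3 : I ∪ {a', b} ∉ 𝓢 := h34 p2
        exact coverLem b' hb'R.2 (fun S hS => by
          rcases hSstruct S hS with rfl | rfl | rfl | rfl
          · exact absurd hS p1
          · exact hins2 a b'
          · exact absurd hS np3
          · exact hins2 a' b')
      · exact coverLem a' ha'R.2 (fun S hS => by
          rcases hSstruct S hS with rfl | rfl | rfl | rfl
          · exact absurd hS p1
          · exact absurd hS p2
          · exact hins1 a' b
          · exact hins1 a' b')
  rcases hdiag with ⟨hS1, hS2⟩ | ⟨hS1, hS2⟩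
  · -- diagonal {a,b}, {a',b'}
    have hint : (I ∪ {a, b}) ∩ (I ∪ {a', b'}) = I :=
      interI haR.2 hbR.2 haa' hab' ha'b.symm hbb'
    have hRstruct : ∀ R ∈ 𝓡,
        R = I ∪ {a, a'} ∨ R = I ∪ {a, b'} ∨ R = I ∪ {a', b} ∨ R = I ∪ {b, b'} := by
      intro R hR
      obtain ⟨-, -, x, y, hx1, hx2, hy1, hy2, hReq⟩ := keyA (h𝓢 _ hS1).1 (h𝓢 _ hS2).1
        (h𝓡 _ hR).1 (by rw [hint]; omega) (hcross _ hR _ hS1) (hcross _ hR _ hS2)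
      rw [hint] at hReq
      have hx : x = a ∨ x = b := by
        rcases mem_union.mp hx1 with h | h
        · exact absurd (mem_union_left _ h) hx2
        · simpa using h
      have hy : y = a' ∨ y = b' := by
        rcases mem_union.mp hy1 with h | h
        · exact absurd (mem_union_left _ h) hy2
        · simpa using h
      rcases hx with rfl | rfl <;> rcases hy with rfl | rfl
      · exact Or.inl hReq
      · exact Or.inr (Or.inl hReq)
      · exact Or.inr (Or.inr (Or.inl (by rw [hReq, pair_comm x y])))
      · exact Or.inr (Or.inr (Or.inr hReq))
    exact endgame c k t ht 𝓡 𝓢 h𝓡 h𝓢 hcross I a a' b b' haR.2 ha'R.2 hbR.2 hb'R.2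
      haa' hbb' hab hab' ha'b ha'b' hIc hR1mem hR2mem hS1 hS2 hSstruct hRstruct
  · -- diagonal {a,b'}, {a',b}
    have hint : (I ∪ {a, b'}) ∩ (I ∪ {a', b}) = I :=
      interI haR.2 hb'R.2 haa' hab ha'b'.symm hbb'.symm
    have hRstruct : ∀ R ∈ 𝓡,
        R = I ∪ {a, a'} ∨ R = I ∪ {a, b} ∨ R = I ∪ {a', b'} ∨ R = I ∪ {b', b} := by
      intro R hR
      obtain ⟨-, -, x, y, hx1, hx2, hy1, hy2, hReq⟩ := keyA (h𝓢 _ hS1).1 (h𝓢 _ hS2).1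
        (h𝓡 _ hR).1 (by rw [hint]; omega) (hcross _ hR _ hS1) (hcross _ hR _ hS2)
      rw [hint] at hReq
      have hx : x = a ∨ x = b' := by
        rcases mem_union.mp hx1 with h | h
        · exact absurd (mem_union_left _ h) hx2
        · simpa using h
      have hy : y = a' ∨ y = b := by
        rcases mem_union.mp hy1 with h | h
        · exact absurd (mem_union_left _ h) hy2
        · simpa using h
      rcases hx with rfl | rfl <;> rcases hy with rfl | rfl
      · exact Or.inl hReq
      · exact Or.inr (Or.inl (by rw [hReq, pair_comm x y]))
      · exact Or.inr (Or.inr (Or.inl (by rw [hReq, pair_comm x y])))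
      · exact Or.inr (Or.inr (Or.inr (by rw [hReq, pair_comm x y])))
    exact endgame c k t ht 𝓡 𝓢 h𝓡 h𝓢 hcross I a a' b' b haR.2 ha'R.2 hb'R.2 hbR.2
      haa' hbb'.symm hab' hab ha'b' ha'b hIc hR1mem
      (by rw [pair_comm b' b]; exact hR2mem) hS1 hS2
      (fun S hS => by rcases hSstruct S hS with h | h | h | h <;> tauto)
      hRstruct
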